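/- Let $\{a_{mj}\}_{j\ge 1}$, $1\le m\le n$, be sequences of positive real numbers such that for each fixed $m$, $\sum_{j=1}^\infty \min(a_{1j},\dots,a_{m-1,j},a_{m+1,j},\dots,a_{nj}) = \infty$. Define $u(z)=\sum_{j=1}^\infty \max(a_{1j}\log|z_1|,\dots,a_{nj}\log|z_n|)$ on the unit polydisc. Then for every $1\le m\le n$ and every $z\in\Delta^n$ with $z_m=0$ and $|z_l|<1$ for all $l\ne m$, the series defining $u(z)$ diverges to $-\infty$. -/

import Mathlib

open Filter

noncomputable section

/-- Extended logarithm: `elog 0 = ⊥`. -/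
def elog (x : ℝ) : EReal := if x = 0 then ⊥ else ((Real.log x : ℝ) : EReal)

lemma ereal_coe_sum {ι : Type*} (s : Finset ι) (g : ι → ℝ) :
    ((∑ i ∈ s, g i : ℝ) : EReal) = ∑ i ∈ s, ((g i : ℝ) : EReal) := by
  classical
  induction s using Finset.induction with
  | empty => simp
  | insert _ _ h ih => simp [Finset.sum_insert h, EReal.coe_add, ih]

/-- If for each `m` the minima over the other rows are not summable, then the series
`u(z) = ∑_j max_m (a_{mj} log|z_m|)` diverges to `-∞` at every point of the unit polydisc
having `z_m = 0` for some `m` (the term `a_{mj} log 0 = -∞` being interpreted in `EReal`). -/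
theorem stmt1 (n : ℕ) (hn : 2 ≤ n) (a : Fin n → ℕ → ℝ)
    (hpos : ∀ m j, 0 < a m j)
    (hdiv : ∀ m : Fin n,
      Tendsto (fun N => ∑ j ∈ Finset.range N, ⨅ l : {l : Fin n // l ≠ m}, a l.1 j)
        atTop atTop)
    (m : Fin n) (z : Fin n → ℂ) (hzm : z m = 0) (hz : ∀ l, ‖z l‖ < 1) :
    Tendsto
      (fun N => ∑ j ∈ Finset.range N, ⨆ l : Fin n, (a l j : EReal) * elog (‖z l‖))
      atTop (nhds (⊥ : EReal)) := by
  have hne : Nonempty (Fin n) := ⟨m⟩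
  set b : ℕ → ℝ := fun j => ⨅ l : {l : Fin n // l ≠ m}, a l.1 j with hb
  -- choose a negative upper bound `c` for all the logs of nonzero coordinates
  set f : Fin n → ℝ := fun l => if z l = 0 then (-1 : ℝ) else Real.log (‖z l‖)
    with hf
  set c : ℝ := Finset.univ.sup' Finset.univ_nonempty f with hc
  have hcneg : c < 0 := by
    rw [hc, Finset.sup'_lt_iff]
    intro l _
    by_cases h : z l = 0
    · simp [hf, h]
    · simp only [hf, h, if_false]
      exact Real.log_neg (by simpa [norm_pos_iff] using h) (hz l)
  have hclog : ∀ l, z l ≠ 0 → Real.log (‖z l‖) ≤ c := by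
    intro l h
    have : f l ≤ c := Finset.le_sup' f (Finset.mem_univ l)
    simpa [hf, h] using this
  -- each term of the series is at most `b j * c`
  have hterm : ∀ j, (⨆ l : Fin n, (a l j : EReal) * elog (‖z l‖))
      ≤ ((b j * c : ℝ) : EReal) := by
    intro j
    refine iSup_le fun l => ?_
    by_cases h : z l = 0
    · have : elog (‖z l‖) = ⊥ := by simp [elog, h]
      rw [this, EReal.coe_mul_bot_of_pos (hpos l j)]
      exact bot_le
    · have habs : ‖z l‖ ≠ 0 := by simpa [norm_ne_zero_iff] using h
      have : elog (‖z l‖) = ((Real.log (‖z l‖) : ℝ) : EReal) := by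
        simp [elog, habs]
      rw [this, ← EReal.coe_mul, EReal.coe_le_coe_iff]
      have hlm : l ≠ m := fun e => h (e ▸ hzm)
      have hb_le : b j ≤ a l j :=
        ciInf_le (Set.Finite.bddBelow (Set.finite_range _)) (⟨l, hlm⟩ : {l : Fin n // l ≠ m})
      calc a l j * Real.log (‖z l‖) ≤ a l j * c :=
            mul_le_mul_of_nonneg_left (hclog l h) (hpos l j).le
        _ ≤ b j * c := mul_le_mul_of_nonpos_right hb_le hcneg.le
  -- hence the partial sums are at most `(∑ b j) * c`
  have hsum : ∀ N, (∑ j ∈ Finset.range N, ⨆ l : Fin n, (a l j : EReal) * elog (‖z l‖))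
      ≤ (((∑ j ∈ Finset.range N, b j) * c : ℝ) : EReal) := by
    intro N
    calc (∑ j ∈ Finset.range N, ⨆ l : Fin n, (a l j : EReal) * elog (‖z l‖))
        ≤ ∑ j ∈ Finset.range N, ((b j * c : ℝ) : EReal) :=
          Finset.sum_le_sum fun j _ => hterm j
      _ = (((∑ j ∈ Finset.range N, b j) * c : ℝ) : EReal) := by
          rw [Finset.sum_mul, ereal_coe_sum]
  -- the right-hand side tends to `-∞`
  have hbot : Tendsto (fun N => (∑ j ∈ Finset.range N, b j) * c) atTop atBot :=
    (hdiv m).atTop_mul_const_of_neg' hcneg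
  rw [EReal.tendsto_nhds_bot_iff_real]
  intro x
  filter_upwards [hbot.eventually_lt_atBot x] with N hN
  exact lt_of_le_of_lt (hsum N) (by exact_mod_cast hN)
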